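/- For every prime p with p ≥ 5, p^2 divides the integer S₁ = ∑_{j=1}^{p−1} ∏_{k=1, k≠j}^{p−1} k. -/

import Mathlib

theorem sq_dvd_harmonic_sum (p : ℕ) (hp : p.Prime) (h5 : 5 ≤ p) :
    (p : ℤ)^2 ∣ ∑ j ∈ Finset.Icc 1 (p - 1), ∏ k ∈ (Finset.Icc 1 (p - 1)).erase j, (k : ℤ) := by
  haveI : Fact p.Prime := ⟨hp⟩
  haveI : NeZero (p^2) := ⟨by positivity⟩
  rw [show ((p:ℤ)^2) = ((p^2 : ℕ) : ℤ) by push_cast; ring,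
    ← ZMod.intCast_zmod_eq_zero_iff_dvd]
  push_cast
  set R := ZMod (p^2) with hR
  set s := Finset.Icc 1 (p-1) with hs
  -- basic facts
  have hnd : ∀ j ∈ s, ¬ p ∣ j := by
    intro j hj hdvd
    rw [hs, Finset.mem_Icc] at hj
    have := Nat.le_of_dvd (by omega) hdvd
    omega
  have hunit : ∀ j ∈ s, IsUnit ((j : ℕ) : R) := by
    intro j hj
    exact (ZMod.isUnit_iff_coprime j (p^2)).mpr (Nat.Coprime.pow_right 2
      (Nat.coprime_comm.mp ((Nat.Prime.coprime_iff_not_dvd hp).mpr (hnd j hj))))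
  set φ : R →+* ZMod p := ZMod.castHom (dvd_pow_self p (by norm_num : (2:ℕ) ≠ 0)) (ZMod p) with hφ
  -- key: p * x = 0 if x ≡ 0 mod p
  have hker : ∀ x : R, φ x = 0 → ((p:ℕ) : R) * x = 0 := by
    intro x hx
    have hval : ((x.val : ℕ) : R) = x := ZMod.natCast_rightInverse x
    have hx' : ((x.val : ℕ) : ZMod p) = 0 := by rw [← map_natCast φ, hval, hx]
    rw [ZMod.natCast_eq_zero_iff] at hx'
    obtain ⟨c, hc⟩ := hx'
    calc ((p:ℕ) : R) * x = ((p * x.val : ℕ) : R) := by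
          show ((p:ℕ) : ZMod (p^2)) * x = ((p * x.val : ℕ) : ZMod (p^2))
          push_cast
          rw [hval]
      _ = ((p^2 : ℕ) : R) * ((c:ℕ) : R) := by rw [hc]; show (((p*(p*c)) : ℕ) : ZMod (p^2)) = ((p^2:ℕ):ZMod (p^2)) * ((c:ℕ):ZMod (p^2)); push_cast; ring
      _ = 0 := by rw [ZMod.natCast_self]; ring
  -- field lemma
  have hF : ∑ j ∈ s, (((j:ℕ) : ZMod p)⁻¹)^2 = 0 := by
    have h1 : ∑ j ∈ s, (((j:ℕ) : ZMod p)⁻¹)^2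
        = ∑ x ∈ Finset.univ.erase (0 : ZMod p), (x⁻¹)^2 := by
      apply Finset.sum_nbij' (fun j => ((j:ℕ) : ZMod p)) (fun x => x.val)
      · intro a ha
        simp only [Finset.mem_erase, Finset.mem_univ, and_true]
        rw [Ne, ZMod.natCast_eq_zero_iff]
        exact hnd a ha
      · intro x hx
        have h0 : x ≠ 0 := (Finset.mem_erase.mp hx).1
        have hlt : x.val < p := ZMod.val_lt x
        have hne : x.val ≠ 0 := fun h => h0 (by rwa [ZMod.val_eq_zero] at h)
        rw [hs, Finset.mem_Icc]; omega
      · intro a ha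
        rw [hs, Finset.mem_Icc] at ha
        exact ZMod.val_cast_of_lt (by omega)
      · intro x _
        exact ZMod.natCast_rightInverse x
      · intro a _; rfl
    have h2 : ∑ x ∈ Finset.univ.erase (0 : ZMod p), (x⁻¹)^2
        = ∑ x ∈ Finset.univ.erase (0 : ZMod p), x^2 := by
      apply Finset.sum_nbij' (fun x => x⁻¹) (fun x => x⁻¹)
      · intro a ha
        simp only [Finset.mem_erase, Finset.mem_univ, and_true] at *
        exact inv_ne_zero ha
      · intro a ha
        simp only [Finset.mem_erase, Finset.mem_univ, and_true] at *
        exact inv_ne_zero ha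
      · intro a _; exact inv_inv a
      · intro a _; exact inv_inv a
      · intro a _; rfl
    have h3 : ∑ x ∈ Finset.univ.erase (0 : ZMod p), x^2 = ∑ x : ZMod p, x^2 :=
      Finset.sum_erase _ (by norm_num)
    have h4 : ∑ x : ZMod p, x^2 = 0 :=
      FiniteField.sum_pow_lt_card_sub_one (K := ZMod p) 2 (by rw [ZMod.card]; omega)
    rw [h1, h2, h3, h4]
  -- products as N * j⁻¹
  set N : R := ∏ k ∈ s, ((k:ℕ) : R) with hN
  have hprod : ∀ j ∈ s, ∏ k ∈ s.erase j, ((k:ℕ) : R) = N * ((j : ℕ) : R)⁻¹ := by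
    intro j hj
    have h1 := Finset.prod_erase_mul s (fun k => ((k:ℕ):R)) hj
    have hu := hunit j hj
    calc ∏ k ∈ s.erase j, ((k:ℕ):R)
        = (∏ k ∈ s.erase j, ((k:ℕ):R)) * (((j:ℕ):R) * ((j:ℕ):R)⁻¹) := by
          rw [ZMod.mul_inv_of_unit _ hu, mul_one]
      _ = N * ((j:ℕ):R)⁻¹ := by rw [← mul_assoc, h1]
  rw [Finset.sum_congr rfl hprod, ← Finset.mul_sum]
  set T : R := ∑ j ∈ s, ((j:ℕ) : R)⁻¹ with hT
  -- reversal
  have hrev : T = ∑ j ∈ s, (((p - j : ℕ)) : R)⁻¹ := by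
    rw [hT]
    apply Finset.sum_nbij' (fun j => p - j) (fun j => p - j)
    · intro a ha; rw [hs, Finset.mem_Icc] at *; omega
    · intro a ha; rw [hs, Finset.mem_Icc] at *; omega
    · intro a ha; rw [hs, Finset.mem_Icc] at ha; omega
    · intro a ha; rw [hs, Finset.mem_Icc] at ha; omega
    · intro a ha
      rw [hs, Finset.mem_Icc] at ha
      have : p - (p - a) = a := by omega
      rw [this]
  have hpp : ((p:ℕ):R) * ((p:ℕ):R) = 0 := by
    have : ((p^2 : ℕ) : R) = 0 := ZMod.natCast_self _
    calc ((p:ℕ):R) * ((p:ℕ):R) = ((p^2 : ℕ) : R) := by push_cast; ring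
      _ = 0 := this
  -- per-term identity
  have hterm : ∀ j ∈ s, ((j:ℕ):R)⁻¹ + (((p - j:ℕ)):R)⁻¹
      = ((p:ℕ):R) * (-((((j:ℕ):R)⁻¹)^2)) := by
    intro j hj
    have hjm : 1 ≤ j ∧ j ≤ p - 1 := by rw [hs, Finset.mem_Icc] at hj; exact hj
    have hj2 : p - j ∈ s := by rw [hs, Finset.mem_Icc]; omega
    set a : R := ((j:ℕ):R) with ha'
    set b : R := (((p-j:ℕ)):R) with hb'
    have ha : IsUnit a := hunit j hj
    have hb : IsUnit b := hunit (p-j) hj2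
    have hab : a + b = ((p:ℕ) : R) := by
      rw [ha', hb', ← Nat.cast_add]
      congr 1
      omega
    have ha1 : a * a⁻¹ = 1 := ZMod.mul_inv_of_unit a ha
    have hb1 : b * b⁻¹ = 1 := ZMod.mul_inv_of_unit b hb
    have e1 : a⁻¹ + b⁻¹ = a⁻¹ * b⁻¹ * ((p:ℕ):R) := by
      rw [← hab]
      calc a⁻¹ + b⁻¹ = a⁻¹ * (b * b⁻¹) + (a * a⁻¹) * b⁻¹ := by rw [ha1, hb1]; ring
        _ = a⁻¹ * b⁻¹ * (a + b) := by ring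
    have hbs : b = ((p:ℕ):R) - a := by rw [← hab]; ring
    have h3 : ((p:ℕ):R) * b⁻¹ = -(((p:ℕ):R) * a⁻¹) := by
      apply IsUnit.mul_right_cancel hb
      rw [mul_assoc, ZMod.inv_mul_of_unit b hb, mul_one, hbs]
      have ha2 : a⁻¹ * a = 1 := ZMod.inv_mul_of_unit a ha
      linear_combination (a⁻¹ : R) * hpp - ((p:ℕ):R) * ha2
    rw [e1, show a⁻¹ * b⁻¹ * ((p:ℕ):R) = a⁻¹ * (((p:ℕ):R) * b⁻¹) by ring, h3]
    ring
  -- sum of inverse squares killed by p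
  have hφinv : ∀ j ∈ s, φ (((j:ℕ):R)⁻¹) = ((j:ℕ) : ZMod p)⁻¹ := by
    intro j hj
    have hu := hunit j hj
    have h1 : φ (((j:ℕ):R)⁻¹) * ((j:ℕ) : ZMod p) = 1 := by
      rw [← map_natCast φ ((j:ℕ)), ← map_mul, ZMod.inv_mul_of_unit _ hu, map_one]
    exact eq_inv_of_mul_eq_one_left h1
  have hX : φ (∑ j ∈ s, (((j:ℕ):R)⁻¹)^2) = 0 := by
    rw [map_sum]
    rw [Finset.sum_congr rfl (fun j hj => by rw [map_pow, hφinv j hj])]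
    exact hF
  have hfinal : ((p:ℕ):R) * (∑ j ∈ s, (((j:ℕ):R)⁻¹)^2) = 0 := hker _ hX
  -- conclude 2T = 0
  have h2T0 : ((2:ℕ):R) * T = 0 := by
    have step : ((2:ℕ):R) * T = ∑ j ∈ s, (((j:ℕ):R)⁻¹ + (((p-j:ℕ)):R)⁻¹) := by
      rw [Finset.sum_add_distrib, ← hrev, hT]
      push_cast
      ring
    rw [step, Finset.sum_congr rfl hterm]
    calc ∑ j ∈ s, ((p:ℕ):R) * (-((((j:ℕ):R)⁻¹)^2))
        = -(((p:ℕ):R) * ∑ j ∈ s, (((j:ℕ):R)⁻¹)^2) := by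
          rw [Finset.mul_sum, ← Finset.sum_neg_distrib]
          exact Finset.sum_congr rfl (fun j _ => by ring)
      _ = 0 := by rw [hfinal, neg_zero]
  have h2u : IsUnit ((2:ℕ) : R) := by
    exact (ZMod.isUnit_iff_coprime 2 (p^2)).mpr
      (Nat.Coprime.pow_right 2 ((Nat.coprime_primes Nat.prime_two hp).mpr (by omega)))
  have hT0 : T = 0 := h2u.mul_left_cancel (by rw [h2T0, mul_zero])
  rw [hT0, mul_zero]
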